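/- In the Clifford Hayden–Preskill problem with perfect decoupling (Λ_D injective, hence bijective from Pauli_A mod phase onto its image, with d_D ≥ d_A), for every Pauli operator P_A on A there exists a Pauli operator Q_D on D such that the backward evolution U^† Q_D U ≃ P_A ⊗ Ω_B(Q_D), i.e. the backward time-evolution map Ω_A : Pauli_D → Pauli_A is surjective. -/

import Mathlib

open Matrix Kronecker BigOperators

/-- The `n`-qubit Pauli operator `X^x Z^z` (symplectic representation). -/
noncomputable def pauli {n : ℕ} (x z : Fin n → ZMod 2) :
    Matrix (Fin n → ZMod 2) (Fin n → ZMod 2) ℂ :=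
  fun j k => if j = k + x then ((-1 : ℂ)) ^ (∑ i, (z i * k i).val) else 0

noncomputable def chi (a : ZMod 2) : ℂ := (-1 : ℂ) ^ a.val

lemma zmod2_cases : ∀ a : ZMod 2, a = 0 ∨ a = 1 := by decide

lemma chi_zero : chi 0 = 1 := by simp [chi]

lemma chi_one : chi 1 = -1 := by
  simp [chi, ZMod.val_one]

lemma chi_add (a b : ZMod 2) : chi (a + b) = chi a * chi b := by
  rcases zmod2_cases a with rfl | rfl <;> rcases zmod2_cases b with rfl | rfl <;>
    simp [chi_zero, chi_one, show ((1 : ZMod 2) + 1) = 0 from rfl]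

lemma chi_ne_zero (a : ZMod 2) : chi a ≠ 0 := by
  rcases zmod2_cases a with rfl | rfl <;> norm_num [chi_zero, chi_one]

lemma chi_inj {a b : ZMod 2} (h : chi a = chi b) : a = b := by
  rcases zmod2_cases a with rfl | rfl <;> rcases zmod2_cases b with rfl | rfl <;>
    first | rfl | (rw [chi_zero, chi_one] at h; norm_num at h) | (rw [chi_one, chi_zero] at h; norm_num at h)

lemma chi_mul_self (a : ZMod 2) : chi a * chi a = 1 := by
  rcases zmod2_cases a with rfl | rfl <;> norm_num [chi_zero, chi_one]

lemma chi_sum {ι : Type*} (s : Finset ι) (f : ι → ZMod 2) :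
    chi (∑ i ∈ s, f i) = ∏ i ∈ s, chi (f i) := by
  classical
  induction s using Finset.cons_induction with
  | empty => simp [chi_zero]
  | cons a s ha ih => rw [Finset.sum_cons, Finset.prod_cons, chi_add, ih]

lemma pauli_apply {n : ℕ} (x z j k : Fin n → ZMod 2) :
    pauli x z j k = if j = k + x then chi (z ⬝ᵥ k) else 0 := by
  rw [pauli]
  congr 1
  rw [dotProduct, chi_sum]
  simp only [chi]
  rw [Finset.prod_pow_eq_pow_sum]


lemma pauli_mul {n : ℕ} (x z x' z' : Fin n → ZMod 2) :
    pauli x z * pauli x' z' = chi (z ⬝ᵥ x') • pauli (x + x') (z + z') := by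
  ext j k
  simp only [Matrix.mul_apply, pauli_apply, Matrix.smul_apply, smul_eq_mul]
  rw [Finset.sum_eq_single (k + x')]
  · rw [if_pos rfl]
    have hc2 : k + x' + x = k + (x + x') := by rw [add_assoc, add_comm x' x]
    rw [hc2]
    by_cases h : j = k + (x + x')
    · rw [if_pos h, if_pos h]
      rw [dotProduct_add, add_dotProduct, chi_add, chi_add]
      ring
    · rw [if_neg h, if_neg h, zero_mul, mul_zero]
  · intro l _ hl
    rw [if_neg hl, mul_zero]
  · intro h; exact absurd (Finset.mem_univ _) h

lemma pauli_zero {n : ℕ} : pauli (0 : Fin n → ZMod 2) 0 = 1 := by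
  ext j k
  rw [pauli_apply]
  simp [Matrix.one_apply, eq_comm, chi_zero]

lemma pauli_kron_ne_zero {n m : ℕ} (x z : Fin n → ZMod 2) (u w : Fin m → ZMod 2) :
    pauli x z ⊗ₖ pauli u w ≠ 0 := by
  intro h
  have := congrFun (congrFun h (x, u)) (0, 0)
  rw [Matrix.kroneckerMap_apply, pauli_apply, pauli_apply] at this
  simp [chi_zero] at this

lemma kron_eq {n m : ℕ} {c c' : ℂ} {x z x' z' : Fin n → ZMod 2}
    {u w u' w' : Fin m → ZMod 2} (hc : c ≠ 0)
    (h : c • (pauli x z ⊗ₖ pauli u w) = c' • (pauli x' z' ⊗ₖ pauli u' w')) :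
    c = c' ∧ x = x' ∧ z = z' ∧ u = u' ∧ w = w' := by
  have key : ∀ (k : Fin n → ZMod 2) (l : Fin m → ZMod 2),
      c * (chi (z ⬝ᵥ k) * chi (w ⬝ᵥ l)) =
        c' * ((if k + x = k + x' then chi (z' ⬝ᵥ k) else 0) *
          (if l + u = l + u' then chi (w' ⬝ᵥ l) else 0)) := by
    intro k l
    have := congrFun (congrFun h (k + x, l + u)) (k, l)
    simpa [Matrix.kroneckerMap_apply, pauli_apply, Matrix.smul_apply] using this
  have h00 := key 0 0
  simp only [dotProduct_zero, chi_zero, mul_one, zero_add] at h00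
  have hx : x = x' := by
    by_contra hxx
    rw [if_neg hxx] at h00
    simp at h00; tauto
  subst hx
  have hu : u = u' := by
    by_contra huu
    rw [if_neg huu] at h00
    simp at h00; tauto
  subst hu
  simp only [eq_self_iff_true, if_true, mul_one] at h00
  subst h00
  have hz : z = z' := by
    funext i
    have hkey := key (Pi.single i 1) 0
    simp only [dotProduct_zero, chi_zero, mul_one, eq_self_iff_true, if_true] at hkey
    have := chi_inj (mul_left_cancel₀ hc hkey)
    rwa [dotProduct_single, dotProduct_single, mul_one, mul_one] at this
  have hw : w = w' := by
    funext i
    have hkey := key 0 (Pi.single i 1)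
    simp only [dotProduct_zero, chi_zero, one_mul, mul_one, eq_self_iff_true, if_true] at hkey
    have := chi_inj (mul_left_cancel₀ hc hkey)
    rwa [dotProduct_single, dotProduct_single, mul_one, mul_one] at this
  exact ⟨rfl, rfl, hz, rfl, hw⟩

lemma smul_cancel_ne {m n : Type*} {r s : ℂ} {M : Matrix m n ℂ} (hM : M ≠ 0)
    (h : r • M = s • M) : r = s := by
  by_contra hrs
  apply hM
  have h0 : (r - s) • M = 0 := by rw [sub_smul, h, sub_self]
  calc M = (r - s)⁻¹ • ((r - s) • M) := by
        rw [smul_smul, inv_mul_cancel₀ (sub_ne_zero.mpr hrs), one_smul]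
    _ = 0 := by rw [h0, smul_zero]

lemma zmod2_rearrange : ∀ A B C D : ZMod 2, D + A = C + B → A + B = C + D := by decide

/-- Under perfect decoupling (injective forward map `Λ_D`), the backward
time-evolution map `Ω_A : Pauli_D → Pauli_A` is surjective: for every Pauli
`P_A` there is a Pauli `Q_D` with `U† (I ⊗ Q_D) U ≃ P_A ⊗ Ω_B(Q_D)`. -/
theorem stmt14 (nA nB nC nD : ℕ)
    (U : Matrix ((Fin nC → ZMod 2) × (Fin nD → ZMod 2))
      ((Fin nA → ZMod 2) × (Fin nB → ZMod 2)) ℂ)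
    (hU1 : U * Uᴴ = 1) (hU2 : Uᴴ * U = 1)
    -- forward Clifford decomposition: Λ_C, Λ_D
    (c : (Fin nA → ZMod 2) → (Fin nA → ZMod 2) → ℂ)
    (xc zc : (Fin nA → ZMod 2) → (Fin nA → ZMod 2) → (Fin nC → ZMod 2))
    (xd zd : (Fin nA → ZMod 2) → (Fin nA → ZMod 2) → (Fin nD → ZMod 2))
    (hClif : ∀ x z : Fin nA → ZMod 2, ‖c x z‖ = 1 ∧
      U * (pauli x z ⊗ₖ (1 : Matrix (Fin nB → ZMod 2) (Fin nB → ZMod 2) ℂ)) * Uᴴ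
        = c x z • (pauli (xc x z) (zc x z) ⊗ₖ pauli (xd x z) (zd x z)))
    -- backward Clifford decomposition: Ω_A, Ω_B
    (c' : (Fin nD → ZMod 2) → (Fin nD → ZMod 2) → ℂ)
    (gxa gza : (Fin nD → ZMod 2) → (Fin nD → ZMod 2) → (Fin nA → ZMod 2))
    (gxb gzb : (Fin nD → ZMod 2) → (Fin nD → ZMod 2) → (Fin nB → ZMod 2))
    (hClif' : ∀ xq zq : Fin nD → ZMod 2, ‖c' xq zq‖ = 1 ∧
      Uᴴ * ((1 : Matrix (Fin nC → ZMod 2) (Fin nC → ZMod 2) ℂ) ⊗ₖ pauli xq zq) * U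
        = c' xq zq • (pauli (gxa xq zq) (gza xq zq) ⊗ₖ pauli (gxb xq zq) (gzb xq zq)))
    -- perfect decoupling: Λ_D is injective
    (hinj : Function.Injective
      (fun PA : (Fin nA → ZMod 2) × (Fin nA → ZMod 2) => (xd PA.1 PA.2, zd PA.1 PA.2))) :
    ∀ xa za : Fin nA → ZMod 2, ∃ xq zq : Fin nD → ZMod 2,
      gxa xq zq = xa ∧ gza xq zq = za := by
  haveI : Fact (Nat.Prime 2) := ⟨Nat.prime_two⟩
  have hcne : ∀ x z, c x z ≠ 0 := by
    intro x z h
    have h1 := (hClif x z).1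
    rw [h] at h1; simp at h1
  have hc'ne : ∀ xq zq, c' xq zq ≠ 0 := by
    intro xq zq h
    have h1 := (hClif' xq zq).1
    rw [h] at h1; simp at h1
  have conj_mul : ∀ A B : Matrix ((Fin nA → ZMod 2) × (Fin nB → ZMod 2))
      ((Fin nA → ZMod 2) × (Fin nB → ZMod 2)) ℂ,
      (U * A * Uᴴ) * (U * B * Uᴴ) = U * (A * B) * Uᴴ := by
    intro A B
    simp only [Matrix.mul_assoc]
    rw [← Matrix.mul_assoc Uᴴ U, hU2, Matrix.one_mul]
  -- Step 1 : additivity of the forward map Λ_D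
  have hadd : ∀ x z x' z' : Fin nA → ZMod 2,
      xd (x + x') (z + z') = xd x z + xd x' z' ∧
        zd (x + x') (z + z') = zd x z + zd x' z' := by
    intro x z x' z'
    have h0 : U * (pauli (x + x') (z + z') ⊗ₖ
          (1 : Matrix (Fin nB → ZMod 2) (Fin nB → ZMod 2) ℂ)) * Uᴴ
        = chi (z ⬝ᵥ x') • ((U * (pauli x z ⊗ₖ (1 : Matrix (Fin nB → ZMod 2) (Fin nB → ZMod 2) ℂ)) * Uᴴ) * (U * (pauli x' z' ⊗ₖ (1 : Matrix (Fin nB → ZMod 2) (Fin nB → ZMod 2) ℂ)) * Uᴴ)) := by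
      rw [conj_mul, ← Matrix.mul_kronecker_mul, Matrix.one_mul, pauli_mul,
        Matrix.smul_kronecker, Matrix.mul_smul, Matrix.smul_mul, smul_smul,
        chi_mul_self, one_smul]
    have hS : U * (pauli (x + x') (z + z') ⊗ₖ
          (1 : Matrix (Fin nB → ZMod 2) (Fin nB → ZMod 2) ℂ)) * Uᴴ
        = ((chi (z ⬝ᵥ x') * (c x z * c x' z')) *
            (chi (zc x z ⬝ᵥ xc x' z') * chi (zd x z ⬝ᵥ xd x' z'))) •
          (pauli (xc x z + xc x' z') (zc x z + zc x' z') ⊗ₖ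
            pauli (xd x z + xd x' z') (zd x z + zd x' z')) := by
      rw [h0, (hClif x z).2, (hClif x' z').2, Matrix.smul_mul, Matrix.mul_smul,
        ← Matrix.mul_kronecker_mul, pauli_mul, pauli_mul, Matrix.smul_kronecker,
        Matrix.kronecker_smul, smul_smul, smul_smul, smul_smul, smul_smul]
      congr 1
      ring
    have hk := kron_eq (hcne (x + x') (z + z'))
      (((hClif (x + x') (z + z')).2).symm.trans hS)
    exact ⟨hk.2.2.2.1, hk.2.2.2.2⟩
  -- Step 2 : symplectic duality between Λ_D and Ω_A
  have hdual : ∀ (x z : Fin nA → ZMod 2) (xq zq : Fin nD → ZMod 2),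
      zd x z ⬝ᵥ xq + zq ⬝ᵥ xd x z = z ⬝ᵥ gxa xq zq + gza xq zq ⬝ᵥ x := by
    intro x z xq zq
    have hQconj : U * (Uᴴ * ((1 : Matrix (Fin nC → ZMod 2) (Fin nC → ZMod 2) ℂ)
          ⊗ₖ pauli xq zq) * U) * Uᴴ
        = (1 : Matrix (Fin nC → ZMod 2) (Fin nC → ZMod 2) ℂ) ⊗ₖ pauli xq zq := by
      simp only [Matrix.mul_assoc]
      rw [hU1, Matrix.mul_one, ← Matrix.mul_assoc U Uᴴ, hU1, Matrix.one_mul]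
    have hE1 : (c x z * chi (zd x z ⬝ᵥ xq)) •
          (pauli (xc x z) (zc x z) ⊗ₖ pauli (xd x z + xq) (zd x z + zq))
        = (c' xq zq * chi (z ⬝ᵥ gxa xq zq)) •
          (U * (pauli (x + gxa xq zq) (z + gza xq zq) ⊗ₖ pauli (gxb xq zq) (gzb xq zq)) * Uᴴ) := by
      have lhs : (U * (pauli x z ⊗ₖ (1 : Matrix (Fin nB → ZMod 2) (Fin nB → ZMod 2) ℂ)) * Uᴴ) *
            ((1 : Matrix (Fin nC → ZMod 2) (Fin nC → ZMod 2) ℂ) ⊗ₖ pauli xq zq)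
          = (c x z * chi (zd x z ⬝ᵥ xq)) •
            (pauli (xc x z) (zc x z) ⊗ₖ pauli (xd x z + xq) (zd x z + zq)) := by
        rw [(hClif x z).2, Matrix.smul_mul, ← Matrix.mul_kronecker_mul, Matrix.mul_one,
          pauli_mul, Matrix.kronecker_smul, smul_smul]
      have rhs : (U * (pauli x z ⊗ₖ (1 : Matrix (Fin nB → ZMod 2) (Fin nB → ZMod 2) ℂ)) * Uᴴ) *
            ((1 : Matrix (Fin nC → ZMod 2) (Fin nC → ZMod 2) ℂ) ⊗ₖ pauli xq zq)
          = (c' xq zq * chi (z ⬝ᵥ gxa xq zq)) •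
            (U * (pauli (x + gxa xq zq) (z + gza xq zq) ⊗ₖ pauli (gxb xq zq) (gzb xq zq)) * Uᴴ) := by
        conv_lhs => rw [← hQconj]
        rw [conj_mul, (hClif' xq zq).2, Matrix.mul_smul, ← Matrix.mul_kronecker_mul,
          Matrix.one_mul, pauli_mul, Matrix.smul_kronecker, smul_smul,
          Matrix.mul_smul, Matrix.smul_mul]
      exact lhs.symm.trans rhs
    have hE2 : (c x z * chi (zq ⬝ᵥ xd x z)) •
          (pauli (xc x z) (zc x z) ⊗ₖ pauli (xd x z + xq) (zd x z + zq))
        = (c' xq zq * chi (gza xq zq ⬝ᵥ x)) •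
          (U * (pauli (x + gxa xq zq) (z + gza xq zq) ⊗ₖ pauli (gxb xq zq) (gzb xq zq)) * Uᴴ) := by
      have lhs : ((1 : Matrix (Fin nC → ZMod 2) (Fin nC → ZMod 2) ℂ) ⊗ₖ pauli xq zq) *
            (U * (pauli x z ⊗ₖ (1 : Matrix (Fin nB → ZMod 2) (Fin nB → ZMod 2) ℂ)) * Uᴴ)
          = (c x z * chi (zq ⬝ᵥ xd x z)) •
            (pauli (xc x z) (zc x z) ⊗ₖ pauli (xd x z + xq) (zd x z + zq)) := by
        rw [(hClif x z).2, Matrix.mul_smul, ← Matrix.mul_kronecker_mul, Matrix.one_mul,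
          pauli_mul, Matrix.kronecker_smul, smul_smul, add_comm xq (xd x z),
          add_comm zq (zd x z)]
      have rhs : ((1 : Matrix (Fin nC → ZMod 2) (Fin nC → ZMod 2) ℂ) ⊗ₖ pauli xq zq) *
            (U * (pauli x z ⊗ₖ (1 : Matrix (Fin nB → ZMod 2) (Fin nB → ZMod 2) ℂ)) * Uᴴ)
          = (c' xq zq * chi (gza xq zq ⬝ᵥ x)) •
            (U * (pauli (x + gxa xq zq) (z + gza xq zq) ⊗ₖ pauli (gxb xq zq) (gzb xq zq)) * Uᴴ) := by
        conv_lhs => rw [← hQconj]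
        rw [conj_mul, (hClif' xq zq).2, Matrix.smul_mul, ← Matrix.mul_kronecker_mul,
          Matrix.mul_one, pauli_mul, Matrix.smul_kronecker, smul_smul,
          Matrix.mul_smul, Matrix.smul_mul, add_comm (gxa xq zq) x,
          add_comm (gza xq zq) z]
      exact lhs.symm.trans rhs
    have hMne : (pauli (xc x z) (zc x z) ⊗ₖ pauli (xd x z + xq) (zd x z + zq)) ≠ 0 :=
      pauli_kron_ne_zero _ _ _ _
    have hcomb : ((c' xq zq * chi (gza xq zq ⬝ᵥ x)) * (c x z * chi (zd x z ⬝ᵥ xq))) •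
          (pauli (xc x z) (zc x z) ⊗ₖ pauli (xd x z + xq) (zd x z + zq))
        = ((c' xq zq * chi (z ⬝ᵥ gxa xq zq)) * (c x z * chi (zq ⬝ᵥ xd x z))) •
          (pauli (xc x z) (zc x z) ⊗ₖ pauli (xd x z + xq) (zd x z + zq)) := by
      rw [← smul_smul, hE1, smul_comm, ← hE2, smul_smul, mul_comm]
    have hsc := smul_cancel_ne hMne hcomb
    have hsc2 : (c' xq zq * c x z) * (chi (gza xq zq ⬝ᵥ x) * chi (zd x z ⬝ᵥ xq))
        = (c' xq zq * c x z) * (chi (z ⬝ᵥ gxa xq zq) * chi (zq ⬝ᵥ xd x z)) := by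
      linear_combination hsc
    have hchi := mul_left_cancel₀ (mul_ne_zero (hc'ne xq zq) (hcne x z)) hsc2
    rw [← chi_add, ← chi_add] at hchi
    exact zmod2_rearrange _ _ _ _ (chi_inj hchi)
  -- Step 3 : linear algebra over 𝔽₂
  intro xa za
  let Λhom : ((Fin nA → ZMod 2) × (Fin nA → ZMod 2)) →+
      ((Fin nD → ZMod 2) × (Fin nD → ZMod 2)) :=
    AddMonoidHom.mk' (fun P => (xd P.1 P.2, zd P.1 P.2))
      (fun P P' => Prod.ext (hadd P.1 P.2 P'.1 P'.2).1 (hadd P.1 P.2 P'.1 P'.2).2)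
  let Λlin := Λhom.toZModLinearMap 2
  have hker : LinearMap.ker Λlin = ⊥ := LinearMap.ker_eq_bot.mpr hinj
  obtain ⟨g, hg⟩ := Λlin.exists_leftInverse_of_injective hker
  have hgΛ : ∀ P, g (Λlin P) = P := fun P => by
    have := LinearMap.congr_fun hg P; simpa using this
  let φ : ((Fin nD → ZMod 2) × (Fin nD → ZMod 2)) →ₗ[ZMod 2] ZMod 2 :=
    { toFun := fun v => (g v).2 ⬝ᵥ xa + za ⬝ᵥ (g v).1
      map_add' := by
        intro v w
        simp only [_root_.map_add, Prod.fst_add, Prod.snd_add, add_dotProduct, dotProduct_add]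
        ring
      map_smul' := by
        intro a v
        simp only [_root_.map_smul, Prod.smul_fst, Prod.smul_snd, smul_dotProduct,
          dotProduct_smul, smul_eq_mul, RingHom.id_apply]
        ring }
  obtain ⟨xq, zq, hQ⟩ : ∃ xq zq : Fin nD → ZMod 2,
      ∀ v : (Fin nD → ZMod 2) × (Fin nD → ZMod 2), v.2 ⬝ᵥ xq + zq ⬝ᵥ v.1 = φ v := by
    refine ⟨fun i => φ (0, Pi.single i 1), fun i => φ (Pi.single i 1, 0), fun v => ?_⟩
    have h1 : v.2 ⬝ᵥ (fun i => φ (0, Pi.single i 1)) = φ (0, v.2) := by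
      rw [dotProduct]
      have hterm : ∀ i, v.2 i * φ (0, Pi.single i 1) = φ (0, Pi.single i (v.2 i)) := by
        intro i
        rw [← smul_eq_mul, ← _root_.map_smul]
        congr 1
        refine Prod.ext (by simp) ?_
        funext j
        simp [Pi.single_apply, smul_eq_mul, mul_ite]
      rw [Finset.sum_congr rfl (fun i _ => hterm i), ← _root_.map_sum]
      congr 1
      rw [← prod_mk_sum]
      simp [Finset.univ_sum_single]
    have h2 : (fun i => φ (Pi.single i 1, 0)) ⬝ᵥ v.1 = φ (v.1, 0) := by
      rw [dotProduct]
      have hterm : ∀ i, φ (Pi.single i 1, 0) * v.1 i = φ (Pi.single i (v.1 i), 0) := by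
        intro i
        rw [mul_comm, ← smul_eq_mul, ← _root_.map_smul]
        congr 1
        refine Prod.ext ?_ (by simp)
        funext j
        simp [Pi.single_apply, smul_eq_mul, mul_ite]
      rw [Finset.sum_congr rfl (fun i _ => hterm i), ← _root_.map_sum]
      congr 1
      rw [← prod_mk_sum]
      simp [Finset.univ_sum_single]
    rw [h1, h2, ← _root_.map_add]
    congr 1
    refine Prod.ext (by simp) (by simp)
  have hPA : ∀ x z : Fin nA → ZMod 2,
      z ⬝ᵥ gxa xq zq + gza xq zq ⬝ᵥ x = z ⬝ᵥ xa + za ⬝ᵥ x := by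
    intro x z
    have h1 := hdual x z xq zq
    have h2 : zd x z ⬝ᵥ xq + zq ⬝ᵥ xd x z = φ (Λlin (x, z)) := hQ (Λlin (x, z))
    have h3 : φ (Λlin (x, z)) = z ⬝ᵥ xa + za ⬝ᵥ x := by
      show (g (Λlin (x, z))).2 ⬝ᵥ xa + za ⬝ᵥ (g (Λlin (x, z))).1 = _
      rw [hgΛ (x, z)]
    exact h1.symm.trans (h2.trans h3)
  refine ⟨xq, zq, ?_, ?_⟩
  · funext i
    have := hPA 0 (Pi.single i 1)
    simpa [single_dotProduct, dotProduct_zero, zero_dotProduct] using this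
  · funext i
    have := hPA (Pi.single i 1) 0
    simpa [dotProduct_single, zero_dotProduct, dotProduct_zero] using this
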